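/- Let X = (V,E) be a finite connected graph with at least 2 vertices and λ_1(X) the smallest positive eigenvalue of its Laplacian. Then the Cheeger constant satisfies h(X) ≥ λ_1(X)/2. -/

import Mathlib

open scoped Classical
open Matrix Finset

section CheegerAux

variable {V : Type} [Fintype V] [DecidableEq V]

lemma rayleigh_aux (G : SimpleGraph V)
    [DecidableRel G.Adj] (hconn : G.Connected) (lam : ℝ)
    (hmin : ∀ mu : ℝ, 0 < mu →
      (∃ f : V → ℝ, f ≠ 0 ∧ G.lapMatrix ℝ *ᵥ f = mu • f) → lam ≤ mu)
    (f : V → ℝ) (hsum : ∑ v, f v = 0) :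
    lam * (f ⬝ᵥ f) ≤ f ⬝ᵥ (G.lapMatrix ℝ *ᵥ f) := by
  have hPSD := G.posSemidef_lapMatrix ℝ
  have hL : (G.lapMatrix ℝ).IsHermitian := hPSD.1
  set L := G.lapMatrix ℝ with hLdef
  let B := hL.eigenvectorBasis
  let μ := hL.eigenvalues
  have hinner : ∀ x y : EuclideanSpace ℝ V, (inner ℝ x y : ℝ) = ∑ v, x v * y v := by
    intro x y
    simp [PiLp.inner_apply, RCLike.inner_apply, mul_comm]
  let g : EuclideanSpace ℝ V := WithLp.toLp 2 f
  let gL : EuclideanSpace ℝ V := WithLp.toLp 2 (L *ᵥ f)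
  let c : V → ℝ := fun i => B.repr g i
  have hc : ∀ i, c i = ∑ v, B i v * f v := by
    intro i
    show B.repr g i = _
    rw [B.repr_apply_apply, hinner]
  have key : ∀ i, L *ᵥ (fun v => B i v) = fun v => μ i * B i v :=
    fun i => hL.mulVec_eigenvectorBasis i
  have hff : f ⬝ᵥ f = ∑ i, c i * c i := by
    have h := B.repr.inner_map_map g g
    rw [hinner, hinner] at h
    calc f ⬝ᵥ f = ∑ v, g v * g v := rfl
      _ = ∑ i, B.repr g i * B.repr g i := h.symm
      _ = ∑ i, c i * c i := rfl
  have hd : ∀ i, B.repr gL i = μ i * c i := by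
    intro i
    rw [B.repr_apply_apply, hinner]
    calc ∑ v, B i v * gL v = (fun v => B i v) ⬝ᵥ (L *ᵥ f) := rfl
      _ = ((fun v => B i v) ᵥ* L) ⬝ᵥ f := by rw [dotProduct_mulVec]
      _ = (Lᵀ *ᵥ (fun v => B i v)) ⬝ᵥ f := by rw [← mulVec_transpose]
      _ = (L *ᵥ (fun v => B i v)) ⬝ᵥ f := by rw [show Lᵀ = L from hL]
      _ = (fun v => μ i * B i v) ⬝ᵥ f := by rw [key i]
      _ = μ i * ∑ v, B i v * f v := by
          simp only [dotProduct, Finset.mul_sum, mul_assoc]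
      _ = μ i * c i := by rw [hc]
  have hfLf : f ⬝ᵥ (L *ᵥ f) = ∑ i, μ i * c i * c i := by
    have h := B.repr.inner_map_map g gL
    rw [hinner, hinner] at h
    calc f ⬝ᵥ (L *ᵥ f) = ∑ v, g v * gL v := rfl
      _ = ∑ i, B.repr g i * B.repr gL i := h.symm
      _ = ∑ i, μ i * c i * c i := by
          refine Finset.sum_congr rfl fun i _ => ?_
          rw [hd]
          show c i * (μ i * c i) = μ i * c i * c i
          ring
  have hzero : ∀ i, μ i = 0 → c i = 0 := by
    intro i hμ
    have hker : L *ᵥ (fun v => B i v) = 0 := by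
      rw [key i]
      funext v
      show μ i * B i v = (0 : V → ℝ) v
      rw [hμ, zero_mul]
      rfl
    have hconst := (G.lapMatrix_mulVec_eq_zero_iff_forall_reachable
        (x := fun v => B i v)).mp hker
    obtain ⟨v₀⟩ := hconn.nonempty
    rw [hc]
    calc ∑ v, B i v * f v = ∑ v, B i v₀ * f v :=
          Finset.sum_congr rfl fun v _ => by
            rw [hconst v v₀ (hconn.preconnected v v₀)]
      _ = B i v₀ * ∑ v, f v := by rw [Finset.mul_sum]
      _ = 0 := by rw [hsum, mul_zero]
  have hge : ∀ i, μ i ≠ 0 → lam ≤ μ i := by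
    intro i hμ
    have hnn := hPSD.eigenvalues_nonneg i
    have hposμ : 0 < μ i := lt_of_le_of_ne hnn (Ne.symm hμ)
    refine hmin (μ i) hposμ ⟨fun v => B i v, ?_, key i⟩
    · intro h0
      have h1 : ‖B i‖ = 1 := B.orthonormal.1 i
      have h2 : (B i : EuclideanSpace ℝ V) = 0 := WithLp.ofLp_injective 2 (funext fun v => congrFun h0 v)
      rw [h2, norm_zero] at h1
      exact zero_ne_one h1
  rw [hff, hfLf, Finset.mul_sum]
  refine Finset.sum_le_sum fun i _ => ?_
  by_cases hμ : μ i = 0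
  · rw [hzero i hμ, hμ]; simp
  · have h1 := hge i hμ
    have h2 : 0 ≤ c i * c i := mul_self_nonneg _
    nlinarith

/-- The crossing subgraph. -/
def crossG (G : SimpleGraph V) (W : Finset V) : SimpleGraph V where
  Adj x y := G.Adj x y ∧ ¬(x ∈ W ↔ y ∈ W)
  symm := by constructor; intro x y ⟨h1, h2⟩; exact ⟨h1.symm, fun h => h2 h.symm⟩
  loopless := by constructor; intro x ⟨h1, _⟩; exact G.loopless.irrefl x h1

lemma crossG_edgeFinset (G : SimpleGraph V) [DecidableRel G.Adj] (W : Finset V) :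
    (crossG G W).edgeFinset =
      G.edgeFinset.filter (fun e => ∃ u ∈ e, ∃ w ∈ e, u ∈ W ∧ w ∉ W) := by
  ext e
  induction e using Sym2.ind with
  | _ a b =>
    rw [SimpleGraph.mem_edgeFinset]
    simp only [SimpleGraph.mem_edgeFinset, Finset.mem_filter, SimpleGraph.mem_edgeSet,
      Sym2.mem_iff, crossG]
    constructor
    · rintro ⟨hadj, hx⟩
      refine ⟨hadj, ?_⟩
      by_cases ha : a ∈ W
      · exact ⟨a, Or.inl rfl, b, Or.inr rfl, ha, fun hb => hx ⟨fun _ => hb, fun _ => ha⟩⟩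
      · have hb : b ∈ W := by tauto
        exact ⟨b, Or.inr rfl, a, Or.inl rfl, hb, ha⟩
    · rintro ⟨hadj, u, hu, w, hw, huW, hwW⟩
      refine ⟨hadj, fun hiff => ?_⟩
      rcases hu with rfl | rfl <;> rcases hw with rfl | rfl <;> tauto

lemma cross_double_count (G : SimpleGraph V) [DecidableRel G.Adj] (W : Finset V) :
    (∑ i : V, ∑ j : V, if (crossG G W).Adj i j then (1:ℝ) else 0) =
      2 * (G.edgeFinset.filter (fun e => ∃ u ∈ e, ∃ w ∈ e, u ∈ W ∧ w ∉ W)).card := by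
  rw [← crossG_edgeFinset]
  have h := (crossG G W).two_mul_card_edgeFinset
  have h2 : (∑ i : V, ∑ j : V, if (crossG G W).Adj i j then (1:ℝ) else 0) =
      ((univ.filter fun (p : V × V) => (crossG G W).Adj p.1 p.2).card : ℝ) := by
    rw [← Fintype.sum_prod_type']
    rw [Finset.card_filter]
    push_cast
    exact Finset.sum_congr rfl fun p _ => rfl
  rw [h2, ← h]
  push_cast
  ring

end CheegerAux

theorem cheeger_ge_half_lambda_one
    {V : Type} [Fintype V] [DecidableEq V] (G : SimpleGraph V)
    (hconn : G.Connected) (hcard : 2 ≤ Fintype.card V) (lam : ℝ) (hpos : 0 < lam)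
    (heig : ∃ f : V → ℝ, f ≠ 0 ∧ G.lapMatrix ℝ *ᵥ f = lam • f)
    (hmin : ∀ mu : ℝ, 0 < mu →
      (∃ f : V → ℝ, f ≠ 0 ∧ G.lapMatrix ℝ *ᵥ f = mu • f) → lam ≤ mu) :
    sInf {x : ℝ | ∃ W : Finset V, W.Nonempty ∧ W ≠ Finset.univ ∧
        x = ((G.edgeFinset.filter fun e => ∃ u ∈ e, ∃ w ∈ e, u ∈ W ∧ w ∉ W).card : ℝ)
              / (min W.card Wᶜ.card : ℕ)} ≥ lam / 2 := by
  obtain ⟨v₀⟩ := hconn.nonempty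
  have hne : {x : ℝ | ∃ W : Finset V, W.Nonempty ∧ W ≠ Finset.univ ∧
      x = ((G.edgeFinset.filter fun e => ∃ u ∈ e, ∃ w ∈ e, u ∈ W ∧ w ∉ W).card : ℝ)
        / (min W.card Wᶜ.card : ℕ)}.Nonempty := by
    refine ⟨_, {v₀}, Finset.singleton_nonempty v₀, ?_, rfl⟩
    intro h
    have := Finset.card_univ (α := V)
    rw [← h, Finset.card_singleton] at this
    omega
  rw [ge_iff_le]
  refine le_csInf hne ?_
  rintro x ⟨W, hWne, hWuniv, rfl⟩
  -- setup
  set a : ℝ := (W.card : ℝ) with ha_def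
  set b : ℝ := (Wᶜ.card : ℝ) with hb_def
  have ha : 0 < a := by rw [ha_def]; exact_mod_cast Finset.card_pos.mpr hWne
  have hbne : Wᶜ.Nonempty := by
    rw [Finset.nonempty_iff_ne_empty]
    intro h
    exact hWuniv (by simpa [Finset.compl_eq_empty_iff] using h)
  have hb : 0 < b := by rw [hb_def]; exact_mod_cast Finset.card_pos.mpr hbne
  set m : ℝ := ((G.edgeFinset.filter fun e => ∃ u ∈ e, ∃ w ∈ e, u ∈ W ∧ w ∉ W).card : ℝ)
    with hm_def
  have hm : 0 ≤ m := Nat.cast_nonneg _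
  set f : V → ℝ := fun v => if v ∈ W then b else -a with hf_def
  have hfU : univ.filter (fun v => v ∈ W) = W := by ext v; simp
  have hfC : univ.filter (fun v => ¬ v ∈ W) = Wᶜ := by ext v; simp
  have hsum : ∑ v, f v = 0 := by
    rw [hf_def]
    rw [Finset.sum_ite, Finset.sum_const, Finset.sum_const, hfU, hfC]
    simp [nsmul_eq_mul, ← ha_def, ← hb_def]
    ring
  have hff : f ⬝ᵥ f = a * b * (a + b) := by
    have hpt : ∀ v, f v * f v = if v ∈ W then b * b else a * a := by
      intro v
      by_cases h : v ∈ W <;> simp [hf_def, h] <;> ring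
    calc f ⬝ᵥ f = ∑ v, f v * f v := rfl
      _ = ∑ v, (if v ∈ W then b * b else a * a) := Finset.sum_congr rfl fun v _ => hpt v
      _ = a * b * (a + b) := by
          rw [Finset.sum_ite, Finset.sum_const, Finset.sum_const, hfU, hfC]
          simp [nsmul_eq_mul, ← ha_def, ← hb_def]
          ring
  have hquad : f ⬝ᵥ (G.lapMatrix ℝ *ᵥ f) = m * (a + b) ^ 2 := by
    have h1 : f ⬝ᵥ (G.lapMatrix ℝ *ᵥ f) = toLinearMap₂' ℝ (G.lapMatrix ℝ) f f :=
      (Matrix.toLinearMap₂'_apply' _ _ _).symm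
    rw [h1, G.lapMatrix_toLinearMap₂' ℝ f]
    have hpt : ∀ i j, (if G.Adj i j then (f i - f j) ^ 2 else 0) =
        (if (crossG G W).Adj i j then (1:ℝ) else 0) * (a + b) ^ 2 := by
      intro i j
      by_cases hadj : G.Adj i j
      · by_cases hi : i ∈ W <;> by_cases hj : j ∈ W <;>
          simp [crossG, hadj, hi, hj, hf_def] <;> ring
      · simp [crossG, hadj]
    have h2 : (∑ i : V, ∑ j : V, if G.Adj i j then (f i - f j) ^ 2 else 0) =
        (∑ i : V, ∑ j : V, if (crossG G W).Adj i j then (1:ℝ) else 0) * (a + b) ^ 2 := by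
      rw [Finset.sum_mul]
      refine Finset.sum_congr rfl fun i _ => ?_
      rw [Finset.sum_mul]
      exact Finset.sum_congr rfl fun j _ => hpt i j
    rw [h2, cross_double_count G W, ← hm_def]
    ring
  have hray := rayleigh_aux G hconn lam hmin f hsum
  rw [hff, hquad] at hray
  -- final arithmetic
  have hcast : ((min W.card Wᶜ.card : ℕ) : ℝ) = min a b := by
    rw [ha_def, hb_def]
    push_cast
    rfl
  rw [hcast]
  have hs : 0 < min a b := lt_min ha hb
  rw [div_le_div_iff₀ (by norm_num) hs]
  have hab : 0 < a + b := by linarith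
  have h1 : lam * (a * b) ≤ m * (a + b) := by nlinarith
  have hsa : min a b ≤ a := min_le_left a b
  have hsb : min a b ≤ b := min_le_right a b
  have h2 : min a b * (a + b) ≤ 2 * (a * b) := by nlinarith
  nlinarith [mul_le_mul_of_nonneg_left h2 hpos.le]
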